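/- Fix a, b ∈ ℝ and let r(ξ) = (a + b|ξ|² + (3−b)|ξ|⁴ + (1−a)|ξ|⁶)/(1+|ξ|²)³, a support function of constant width w = 1. Then ∫ℂ (|σ|² − (r − 1/2 + ψ)²) dμ = π·(a − b + 1)²/35. Equivalently, the functional I(S) = Vol(S)/Vol(S²_w) for this surface equals 1 − 3(a−b+1)²/35, and for the shifted family r + C (of width 1+2C) one has I = 1 − 3(a−b+1)²/(35(1+2C)²). -/

import Mathlib

open Complex MeasureTheory ComplexConjugate

noncomputable section

/-- Wirtinger derivative ∂/∂ξ of a complex-valued function. -/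
def wd (f : ℂ → ℂ) (ξ : ℂ) : ℂ :=
  (1 / 2) * (fderiv ℝ f ξ 1 - Complex.I * fderiv ℝ f ξ Complex.I)

/-- Wirtinger derivative ∂/∂ξ̄ of a real-valued function, as a complex number. -/
def wdbarR (r : ℂ → ℝ) (ξ : ℂ) : ℂ :=
  (1 / 2) * ((fderiv ℝ r ξ 1 : ℝ) + Complex.I * (fderiv ℝ r ξ Complex.I : ℝ))

/-- F = (1/2)(1+|ξ|²)² ∂r/∂ξ̄. -/
def Fcong (r : ℂ → ℝ) (ξ : ℂ) : ℂ :=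
  (1 / 2) * ((1 + Complex.normSq ξ) ^ 2 : ℝ) * wdbarR r ξ

/-- ψ = (1+|ξ|²)² ∂/∂ξ [F/(1+|ξ|²)²] (real-valued). -/
def psiSlope (r : ℂ → ℝ) (ξ : ℂ) : ℝ :=
  (((1 + Complex.normSq ξ) ^ 2 : ℝ) *
    wd (fun z => Fcong r z / (((1 + Complex.normSq z) ^ 2 : ℝ) : ℂ)) ξ).re

/-- σ = −∂(conj F)/∂ξ. -/
def sigmaSlope (r : ℂ → ℝ) (ξ : ℂ) : ℂ :=
  - wd (fun z => conj (Fcong r z)) ξ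

/-- The round sphere area measure in the stereographic coordinate. -/
def muSphere : Measure ℂ :=
  volume.withDensity fun ξ => ENNReal.ofReal (4 / (1 + Complex.normSq ξ) ^ 2)

/-- Constant width w: r(ξ) + r(−1/conj ξ) = w for all ξ ≠ 0. -/
def ConstWidth (r : ℂ → ℝ) (w : ℝ) : Prop :=
  ∀ ξ : ℂ, ξ ≠ 0 → r ξ + r (-1 / conj ξ) = w

namespace DeficitAux

open Complex MeasureTheory ComplexConjugate Set Filter Topology

/-! ### Elementary improper integrals -/

lemma one_add_sq_pos (y : ℝ) : (0:ℝ) < 1 + y^2 := by positivity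

lemma basis_hasDerivAt (j : ℕ) (y : ℝ) :
    HasDerivAt (fun y : ℝ => -((2*((j:ℝ)+1) * (1+y^2)^(j+1))⁻¹))
      (y / (1+y^2)^(j+2)) y := by
  have h1 : HasDerivAt (fun y : ℝ => 1 + y^2) (2*y) y := by
    simpa using ((hasDerivAt_pow 2 y).const_add 1)
  have h2 : HasDerivAt (fun y : ℝ => (1+y^2)^(j+1))
      ((↑(j+1) * (1+y^2)^j) * (2*y)) y := by
    simpa using h1.fun_pow (j+1)
  have h3 : HasDerivAt (fun y : ℝ => 2*((j:ℝ)+1) * (1+y^2)^(j+1))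
      (2*((j:ℝ)+1) * ((↑(j+1) * (1+y^2)^j) * (2*y))) y := h2.const_mul _
  have hne : 2*((j:ℝ)+1) * (1+y^2)^(j+1) ≠ 0 := by positivity
  have h4 := (h3.fun_inv hne).fun_neg
  refine h4.congr_deriv ?_
  have hpos := one_add_sq_pos y
  field_simp
  push_cast
  ring

lemma basis_tendsto (j : ℕ) :
    Tendsto (fun y : ℝ => -((2*((j:ℝ)+1) * (1+y^2)^(j+1))⁻¹)) atTop (𝓝 0) := by
  have h1 : Tendsto (fun y : ℝ => 1 + y^2) atTop atTop :=
    tendsto_atTop_add_const_left _ 1 (tendsto_pow_atTop two_ne_zero)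
  have h2 : Tendsto (fun y : ℝ => (1+y^2)^(j+1)) atTop atTop :=
    (tendsto_pow_atTop (Nat.succ_ne_zero j)).comp h1
  have h3 : Tendsto (fun y : ℝ => 2*((j:ℝ)+1) * (1+y^2)^(j+1)) atTop atTop :=
    h2.const_mul_atTop (by positivity)
  simpa using (tendsto_inv_atTop_zero.comp h3).neg

lemma basis_integrable (j : ℕ) :
    IntegrableOn (fun y : ℝ => y / (1+y^2)^(j+2)) (Ioi 0) := by
  refine integrableOn_Ioi_deriv_of_nonneg
    (((basis_hasDerivAt j 0).continuousAt).continuousWithinAt)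
    (fun x _ => basis_hasDerivAt j x) (fun x hx => ?_) (basis_tendsto j)
  have h1 := one_add_sq_pos x
  have h2 : (0:ℝ) < x := hx
  positivity

lemma basis_integral (j : ℕ) :
    ∫ y in Ioi (0:ℝ), y / (1+y^2)^(j+2) = 1 / (2*((j:ℝ)+1)) := by
  rw [integral_Ioi_of_hasDerivAt_of_tendsto
    (((basis_hasDerivAt j 0).continuousAt).continuousWithinAt)
    (fun x _ => basis_hasDerivAt j x) (basis_integrable j) (basis_tendsto j)]
  norm_num

/-! ### Wirtinger derivatives of radial-type functions -/

def Dn (ξ : ℂ) : ℂ →L[ℝ] ℝ := (2*ξ.re) • Complex.reCLM + (2*ξ.im) • Complex.imCLM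

lemma Dn_apply (ξ v : ℂ) : Dn ξ v = 2*ξ.re*v.re + 2*ξ.im*v.im := by
  simp [Dn, mul_assoc]

lemma hasFDerivAt_normSq (ξ : ℂ) : HasFDerivAt Complex.normSq (Dn ξ) ξ := by
  have hre : HasFDerivAt (fun z : ℂ => z.re) Complex.reCLM ξ := Complex.reCLM.hasFDerivAt
  have him : HasFDerivAt (fun z : ℂ => z.im) Complex.imCLM ξ := Complex.imCLM.hasFDerivAt
  have hre2 := (hasDerivAt_pow 2 ξ.re).comp_hasFDerivAt ξ hre
  have him2 := (hasDerivAt_pow 2 ξ.im).comp_hasFDerivAt ξ him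
  have h1 : HasFDerivAt (fun z : ℂ => z.re^2 + z.im^2)
      ((2*ξ.re) • Complex.reCLM + (2*ξ.im) • Complex.imCLM) ξ := by
    have := hre2.fun_add him2
    simpa [smul_smul] using this
  have he : (fun z : ℂ => z.re^2 + z.im^2) = Complex.normSq := by
    funext z; simp [Complex.normSq_apply, sq]
  rw [he] at h1
  exact h1

lemma hasFDerivAt_radial (u u' : ℝ → ℝ) (hu : ∀ t, 0 ≤ t → HasDerivAt u (u' t) t) (ξ : ℂ) :
    HasFDerivAt (fun z : ℂ => u (Complex.normSq z)) (u' (Complex.normSq ξ) • Dn ξ) ξ :=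
  (hu _ (Complex.normSq_nonneg ξ)).comp_hasFDerivAt ξ (hasFDerivAt_normSq ξ)

lemma wdbarR_radial (u u' : ℝ → ℝ) (hu : ∀ t, 0 ≤ t → HasDerivAt u (u' t) t) (ξ : ℂ) :
    wdbarR (fun z => u (Complex.normSq z)) ξ = (u' (Complex.normSq ξ) : ℂ) * ξ := by
  have h := (hasFDerivAt_radial u u' hu ξ).fderiv
  rw [wdbarR, h]
  simp only [ContinuousLinearMap.coe_smul', Pi.smul_apply, Dn_apply, smul_eq_mul]
  simp [Complex.ext_iff]
  constructor <;> ring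

lemma wd_radial_mul (u u' : ℝ → ℝ) (hu : ∀ t, 0 ≤ t → HasDerivAt u (u' t) t) (ξ : ℂ) :
    wd (fun z => (u (Complex.normSq z) : ℂ) * z) ξ
      = ((u (Complex.normSq ξ) + Complex.normSq ξ * u' (Complex.normSq ξ) : ℝ) : ℂ) := by
  have hc : HasFDerivAt (fun z : ℂ => (u (Complex.normSq z) : ℂ))
      (Complex.ofRealCLM.comp (u' (Complex.normSq ξ) • Dn ξ)) ξ :=
    Complex.ofRealCLM.hasFDerivAt.comp ξ (hasFDerivAt_radial u u' hu ξ)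
  have hd : HasFDerivAt (fun z : ℂ => z) (ContinuousLinearMap.id ℝ ℂ) ξ := hasFDerivAt_id ξ
  have h := (hc.fun_mul hd).fderiv
  rw [wd, h]
  simp only [ContinuousLinearMap.add_apply, ContinuousLinearMap.coe_smul', Pi.smul_apply,
    ContinuousLinearMap.id_apply, ContinuousLinearMap.coe_comp', Function.comp_apply,
    Dn_apply, Complex.ofRealCLM_apply, smul_eq_mul]
  simp [Complex.ext_iff, Complex.normSq_apply]
  constructor <;> ring

lemma wd_radial_mul_conj (u u' : ℝ → ℝ) (hu : ∀ t, 0 ≤ t → HasDerivAt u (u' t) t) (ξ : ℂ) :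
    wd (fun z => (u (Complex.normSq z) : ℂ) * conj z) ξ
      = (u' (Complex.normSq ξ) : ℂ) * (conj ξ)^2 := by
  have hc : HasFDerivAt (fun z : ℂ => (u (Complex.normSq z) : ℂ))
      (Complex.ofRealCLM.comp (u' (Complex.normSq ξ) • Dn ξ)) ξ :=
    Complex.ofRealCLM.hasFDerivAt.comp ξ (hasFDerivAt_radial u u' hu ξ)
  have hd : HasFDerivAt (fun z : ℂ => (conj z : ℂ))
      (Complex.conjCLE : ℂ ≃L[ℝ] ℂ).toContinuousLinearMap ξ :=
    Complex.conjCLE.hasFDerivAt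
  have h := (hc.fun_mul hd).fderiv
  rw [wd, h]
  simp only [ContinuousLinearMap.add_apply, ContinuousLinearMap.coe_smul', Pi.smul_apply,
    ContinuousLinearMap.coe_comp', Function.comp_apply, ContinuousLinearEquiv.coe_coe,
    Complex.conjCLE_apply, Dn_apply, Complex.ofRealCLM_apply, smul_eq_mul]
  simp [Complex.ext_iff, Complex.normSq_apply, pow_two, Complex.mul_re, Complex.mul_im]
  constructor <;> ring

/-! ### The explicit example -/

lemma hasDerivAt_cubic (c0 c1 c2 c3 t : ℝ) :
    HasDerivAt (fun s : ℝ => c0 + c1*s + c2*s^2 + c3*s^3)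
      (c1 + 2*c2*t + 3*c3*t^2) t := by
  have h1 := hasDerivAt_id t
  have h2 := hasDerivAt_pow 2 t
  have h3 := hasDerivAt_pow 3 t
  have h4 := (((h1.const_mul c1).const_add c0).add (h2.const_mul c2)).add (h3.const_mul c3)
  refine h4.congr_deriv ?_
  push_cast
  ring

lemma hasDerivAt_pow_one_add (n : ℕ) (t : ℝ) :
    HasDerivAt (fun s : ℝ => (1+s)^n) ((n:ℝ)*(1+t)^(n-1)) t := by
  have := (hasDerivAt_pow n (1+t)).comp t ((hasDerivAt_id t).const_add 1)
  exact this.congr_deriv (by simp)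

def n1num (a b t : ℝ) : ℝ := 6*t + b*(1 - 4*t + t^2) - 3*a*(1 + t^2)
def gfun (a b t : ℝ) : ℝ := (a + b*t + (3-b)*t^2 + (1-a)*t^3) / (1+t)^3
def gder (a b t : ℝ) : ℝ := n1num a b t / (1+t)^4
def Mfun (a b t : ℝ) : ℝ := n1num a b t / (2*(1+t)^4)
def Mder (a b t : ℝ) : ℝ :=
  (((6-4*b) + 2*(b-3*a)*t)*(1+t) - 4*n1num a b t) / (2*(1+t)^5)
def Kfun (a b t : ℝ) : ℝ := n1num a b t / (2*(1+t)^2)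
def Kder (a b t : ℝ) : ℝ := 3*(a-b+1)*(1-t)/(1+t)^3
def qq (t : ℝ) : ℝ := -1 + 18*t - 63*t^2 + 92*t^3 - 63*t^4 + 18*t^5 - t^6

lemma hasDerivAt_n1num (a b t : ℝ) :
    HasDerivAt (fun s => n1num a b s) ((6-4*b) + 2*(b-3*a)*t) t := by
  have h := hasDerivAt_cubic (-3*a+b) (6-4*b) (b-3*a) 0 t
  have he : (fun s : ℝ => -3*a+b + (6-4*b)*s + (b-3*a)*s^2 + 0*s^3)
      = fun s => n1num a b s := by
    funext s; unfold n1num; ring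
  rw [he] at h
  refine h.congr_deriv ?_
  ring

lemma hasDerivAt_gfun (a b : ℝ) (t : ℝ) (ht : 0 ≤ t) :
    HasDerivAt (gfun a b) (gder a b t) t := by
  have h1pos : (0:ℝ) < 1 + t := by linarith
  have hden : ((1:ℝ)+t)^3 ≠ 0 := by positivity
  have h1 : HasDerivAt (fun s : ℝ => a + b*s + (3-b)*s^2 + (1-a)*s^3)
      (b + 2*(3-b)*t + 3*(1-a)*t^2) t := hasDerivAt_cubic a b (3-b) (1-a) t
  have h2 := hasDerivAt_pow_one_add 3 t
  have h := h1.div h2 hden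
  have he : gfun a b = fun s : ℝ =>
      (a + b*s + (3-b)*s^2 + (1-a)*s^3) / (1+s)^3 := by
    funext s; rfl
  rw [he]
  refine h.congr_deriv ?_
  unfold gder n1num
  have hne : ((1:ℝ)+t) ≠ 0 := ne_of_gt h1pos
  field_simp
  ring

lemma hasDerivAt_Mfun (a b : ℝ) (t : ℝ) (ht : 0 ≤ t) :
    HasDerivAt (Mfun a b) (Mder a b t) t := by
  have h1pos : (0:ℝ) < 1 + t := by linarith
  have hden : (2*((1:ℝ)+t)^4) ≠ 0 := by positivity
  have h2 : HasDerivAt (fun s : ℝ => 2*(1+s)^4) (2*((4:ℝ)*(1+t)^3)) t := by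
    have := (hasDerivAt_pow_one_add 4 t).const_mul 2
    norm_num at this ⊢
    convert this using 1
  have h := (hasDerivAt_n1num a b t).div h2 hden
  have he : Mfun a b = fun s : ℝ => n1num a b s / (2*(1+s)^4) := by
    funext s; rfl
  rw [he]
  refine h.congr_deriv ?_
  unfold Mder n1num
  have hne : ((1:ℝ)+t) ≠ 0 := ne_of_gt h1pos
  field_simp

lemma hasDerivAt_Kfun (a b : ℝ) (t : ℝ) (ht : 0 ≤ t) :
    HasDerivAt (Kfun a b) (Kder a b t) t := by
  have h1pos : (0:ℝ) < 1 + t := by linarith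
  have hden : (2*((1:ℝ)+t)^2) ≠ 0 := by positivity
  have h2 : HasDerivAt (fun s : ℝ => 2*(1+s)^2) (2*((2:ℝ)*(1+t))) t := by
    have := (hasDerivAt_pow_one_add 2 t).const_mul 2
    norm_num at this ⊢
    convert this using 1
  have h := (hasDerivAt_n1num a b t).div h2 hden
  have he : Kfun a b = fun s : ℝ => n1num a b s / (2*(1+s)^2) := by
    funext s; rfl
  rw [he]
  refine h.congr_deriv ?_
  unfold Kder n1num
  have hne : ((1:ℝ)+t) ≠ 0 := ne_of_gt h1pos
  field_simp
  ring

end DeficitAux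



namespace DeficitAux

open Complex MeasureTheory ComplexConjugate Set Filter Topology

lemma pointwise (a b : ℝ) (r : ℂ → ℝ)
    (hr : ∀ ξ : ℂ, r ξ =
      (a + b * Complex.normSq ξ + (3 - b) * Complex.normSq ξ ^ 2
        + (1 - a) * Complex.normSq ξ ^ 3) / (1 + Complex.normSq ξ) ^ 3) (ξ : ℂ) :
    Complex.normSq (sigmaSlope r ξ) - (r ξ - 1 / 2 + psiSlope r ξ) ^ 2
      = (a-b+1)^2 * qq (Complex.normSq ξ) / (4*(1+Complex.normSq ξ)^6) := by
  have hreq : r = fun z => gfun a b (Complex.normSq z) := by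
    funext z; rw [hr]; rfl
  have hgd : ∀ t, 0 ≤ t → HasDerivAt (gfun a b) (gder a b t) t :=
    fun t ht => hasDerivAt_gfun a b t ht
  have hMd : ∀ t, 0 ≤ t → HasDerivAt (Mfun a b) (Mder a b t) t :=
    fun t ht => hasDerivAt_Mfun a b t ht
  have hKd : ∀ t, 0 ≤ t → HasDerivAt (Kfun a b) (Kder a b t) t :=
    fun t ht => hasDerivAt_Kfun a b t ht
  have hFcong : Fcong r = fun z => ((Kfun a b (Complex.normSq z) : ℝ) : ℂ) * z := by
    funext z
    have hpos : (0:ℝ) < 1 + Complex.normSq z := by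
      have := Complex.normSq_nonneg z; linarith
    have hne : ((1:ℝ) + Complex.normSq z) ≠ 0 := ne_of_gt hpos
    unfold Fcong
    rw [hreq, wdbarR_radial (gfun a b) (gder a b) hgd z]
    rw [show (1/2 : ℂ) * (((1 + Complex.normSq z)^2 : ℝ) : ℂ)
          * (((gder a b (Complex.normSq z) : ℝ) : ℂ) * z)
        = (((1/2 * (1 + Complex.normSq z)^2 * gder a b (Complex.normSq z) : ℝ)) : ℂ) * z by
      push_cast; ring]
    congr 2
    unfold gder Kfun
    field_simp
  have hinner : (fun z => Fcong r z / (((1 + Complex.normSq z) ^ 2 : ℝ) : ℂ))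
      = fun z => ((Mfun a b (Complex.normSq z) : ℝ) : ℂ) * z := by
    funext z
    have hpos : (0:ℝ) < 1 + Complex.normSq z := by
      have := Complex.normSq_nonneg z; linarith
    have hne : ((1:ℝ) + Complex.normSq z) ≠ 0 := ne_of_gt hpos
    have hneC : (((1 + Complex.normSq z)^2 : ℝ) : ℂ) ≠ 0 := by
      simp only [ne_eq, Complex.ofReal_eq_zero]; positivity
    simp only [hFcong]
    rw [div_eq_iff hneC,
      show (((Mfun a b (Complex.normSq z) : ℝ)) : ℂ) * z * (((1 + Complex.normSq z)^2 : ℝ) : ℂ)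
        = (((Mfun a b (Complex.normSq z) * (1 + Complex.normSq z)^2 : ℝ)) : ℂ) * z by
      push_cast; ring]
    congr 2
    unfold Mfun Kfun
    field_simp
  have hpsi : psiSlope r ξ = (1 + Complex.normSq ξ)^2
      * (Mfun a b (Complex.normSq ξ) + Complex.normSq ξ * Mder a b (Complex.normSq ξ)) := by
    unfold psiSlope
    rw [hinner, wd_radial_mul (Mfun a b) (Mder a b) hMd ξ]
    rw [← Complex.ofReal_mul, Complex.ofReal_re]
  have hconj : (fun z => conj (Fcong r z))
      = fun z => ((Kfun a b (Complex.normSq z) : ℝ) : ℂ) * conj z := by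
    funext z
    simp only [hFcong]
    simp [map_mul, Complex.conj_ofReal]
  have hsig : sigmaSlope r ξ
      = -(((Kder a b (Complex.normSq ξ) : ℝ) : ℂ) * (conj ξ)^2) := by
    unfold sigmaSlope
    rw [hconj, wd_radial_mul_conj (Kfun a b) (Kder a b) hKd ξ]
  have hnsq : Complex.normSq (sigmaSlope r ξ)
      = (Kder a b (Complex.normSq ξ))^2 * (Complex.normSq ξ)^2 := by
    rw [hsig, Complex.normSq_neg, Complex.normSq_mul, map_pow, Complex.normSq_conj,
      Complex.normSq_ofReal]
    ring
  rw [hnsq, hpsi, hr ξ]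
  have ht : (0:ℝ) ≤ Complex.normSq ξ := Complex.normSq_nonneg ξ
  set t := Complex.normSq ξ with hts
  have hpos : (0:ℝ) < 1 + t := by linarith
  have hne : ((1:ℝ)+t) ≠ 0 := ne_of_gt hpos
  unfold Kder Mfun Mder n1num qq
  field_simp
  ring


def co : ℕ → ℝ
  | 0 => -1
  | 1 => 24
  | 2 => -168
  | 3 => 544
  | 4 => -912
  | 5 => 768
  | 6 => -256
  | _ => 0

lemma key_integral (c : ℝ) :
    ∫ ξ : ℂ, c * qq (Complex.normSq ξ) / (4*(1+Complex.normSq ξ)^6) ∂muSphere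
      = Real.pi * c / 35 := by
  have hc : Continuous fun ξ : ℂ => 4 / (1 + Complex.normSq ξ)^2 := by
    apply continuous_const.div
    · exact (continuous_const.add Complex.continuous_normSq).pow 2
    · intro ξ
      have := Complex.normSq_nonneg ξ
      positivity
  have hmeas : Measurable fun ξ : ℂ => Real.toNNReal (4 / (1 + Complex.normSq ξ)^2) :=
    (continuous_real_toNNReal.comp hc).measurable
  rw [show muSphere = volume.withDensity
      (fun ξ : ℂ => ((Real.toNNReal (4 / (1 + Complex.normSq ξ)^2) : NNReal) : ENNReal))
    from rfl]
  rw [integral_withDensity_eq_integral_smul hmeas]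
  have h1 : (fun ξ : ℂ => Real.toNNReal (4 / (1 + Complex.normSq ξ)^2)
        • (c * qq (Complex.normSq ξ) / (4*(1+Complex.normSq ξ)^6)))
      = fun ξ : ℂ => (fun y : ℝ => c * qq (y^2) / (1+y^2)^8) ‖ξ‖ := by
    funext ξ
    have ht := Complex.normSq_nonneg ξ
    have hpos : (0:ℝ) < 1 + Complex.normSq ξ := by linarith
    have hne : ((1:ℝ) + Complex.normSq ξ) ≠ 0 := ne_of_gt hpos
    simp only [Complex.sq_norm]
    rw [NNReal.smul_def, Real.coe_toNNReal _ (by positivity), smul_eq_mul]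
    field_simp
  rw [h1, MeasureTheory.integral_fun_norm_addHaar volume (fun y : ℝ => c * qq (y^2) / (1+y^2)^8)]
  have hdec : ∀ y ∈ Ioi (0:ℝ), y ^ (Module.finrank ℝ ℂ - 1)
        • (c * qq (y^2) / (1+y^2)^8)
      = ∑ j ∈ Finset.range 7, (c * co j) * (y/(1+y^2)^(j+2)) := by
    intro y _
    have h := one_add_sq_pos y
    have hne : ((1:ℝ)+y^2) ≠ 0 := ne_of_gt h
    rw [Complex.finrank_real_complex]
    simp only [Finset.sum_range_succ, Finset.sum_range_zero, co, smul_eq_mul, pow_one]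
    unfold qq
    field_simp
    ring
  rw [setIntegral_congr_fun measurableSet_Ioi hdec]
  rw [MeasureTheory.integral_finset_sum _
    (fun j _ => ((basis_integrable j).const_mul (c * co j)))]
  have hval : ∀ j, ∫ y in Ioi (0:ℝ), (c * co j) * (y/(1+y^2)^(j+2))
      = (c * co j) * (1/(2*((j:ℝ)+1))) := by
    intro j
    rw [integral_const_mul, basis_integral]
  simp only [hval]
  rw [Complex.finrank_real_complex]
  have hball : (volume (Metric.ball (0:ℂ) 1)).toReal = Real.pi := by
    rw [Complex.volume_ball]
    simp [ENNReal.toReal_mul]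
  rw [measureReal_def, hball]
  simp only [Finset.sum_range_succ, Finset.sum_range_zero, co, nsmul_eq_mul, smul_eq_mul]
  push_cast
  ring


end DeficitAux


/-- for the explicit example of §4.2 (with `C = 0`, width `w = 1`),
the deficit integral equals `π(a−b+1)²/35`; equivalently the volume functional is
`I = 1 − 3(a−b+1)²/35`, and `I = 1 − 3(a−b+1)²/(35(1+2C)²)` for the shifted family. -/
theorem example_deficit_integral_and_volume_functional
    (a b : ℝ) (r : ℂ → ℝ)
    (hr : ∀ ξ : ℂ, r ξ =
      (a + b * Complex.normSq ξ + (3 - b) * Complex.normSq ξ ^ 2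
        + (1 - a) * Complex.normSq ξ ^ 3) / (1 + Complex.normSq ξ) ^ 3) :
    (∫ ξ, (Complex.normSq (sigmaSlope r ξ) - (r ξ - 1 / 2 + psiSlope r ξ) ^ 2) ∂muSphere
        = Real.pi * (a - b + 1) ^ 2 / 35) ∧
    (1 - 3 / (Real.pi * 1 ^ 2) *
        ∫ ξ, (Complex.normSq (sigmaSlope r ξ) - (r ξ - 1 / 2 + psiSlope r ξ) ^ 2) ∂muSphere
        = 1 - 3 * (a - b + 1) ^ 2 / 35) ∧
    (∀ C : ℝ,
      1 - 3 / (Real.pi * (1 + 2 * C) ^ 2) *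
        ∫ ξ, (Complex.normSq (sigmaSlope r ξ) - (r ξ - 1 / 2 + psiSlope r ξ) ^ 2) ∂muSphere
        = 1 - 3 * (a - b + 1) ^ 2 / (35 * (1 + 2 * C) ^ 2)) := by
  have hI : ∫ ξ, (Complex.normSq (sigmaSlope r ξ) - (r ξ - 1 / 2 + psiSlope r ξ) ^ 2) ∂muSphere
      = Real.pi * (a - b + 1) ^ 2 / 35 := by
    calc ∫ ξ, (Complex.normSq (sigmaSlope r ξ) - (r ξ - 1 / 2 + psiSlope r ξ) ^ 2) ∂muSphere
        = ∫ ξ, ((a-b+1)^2 * DeficitAux.qq (Complex.normSq ξ)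
            / (4*(1+Complex.normSq ξ)^6)) ∂muSphere :=
          MeasureTheory.integral_congr_ae
            (Filter.Eventually.of_forall (DeficitAux.pointwise a b r hr))
      _ = Real.pi * (a - b + 1) ^ 2 / 35 := DeficitAux.key_integral _
  have hπ := Real.pi_ne_zero
  refine ⟨hI, ?_, ?_⟩
  · rw [hI]
    congr 1
    field_simp
  · intro C
    rw [hI]
    rcases eq_or_ne (1 + 2*C) 0 with h|h
    · rw [h]
      norm_num
    · congr 1
      field_simp

end
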